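/- There exists a constant C > 0 such that for all t > 0 and all w ∈ ℝ, | (1/√(4πt)) Σ_{n=0}^∞ exp(−(w+n)²/(4t)) − erf(w/√t) | ≤ C/√t. -/

import Mathlib

open MeasureTheory

/-- `erf u := (4π)^{-1/2} ∫_u^∞ exp(−x²/4) dx`. -/
noncomputable def erf (u : ℝ) : ℝ :=
  (Real.sqrt (4 * Real.pi))⁻¹ * ∫ x in Set.Ioi u, Real.exp (-(x ^ 2) / 4)

lemma aux_union (w : ℝ) : (⋃ n : ℕ, Set.Ioc (w + n) (w + n + 1)) = Set.Ioi w := by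
  ext x
  simp only [Set.mem_iUnion, Set.mem_Ioc, Set.mem_Ioi]
  constructor
  · rintro ⟨n, h1, _⟩
    have : (0 : ℝ) ≤ n := Nat.cast_nonneg n
    linarith
  · intro hx
    have h1 : 1 ≤ ⌈x - w⌉₊ := Nat.one_le_ceil_iff.mpr (by linarith)
    refine ⟨⌈x - w⌉₊ - 1, ?_, ?_⟩
    · have h2 : ((⌈x - w⌉₊ - 1 : ℕ) : ℝ) < x - w := by
        rw [← Nat.lt_ceil]; omega
      linarith
    · have h3 : x - w ≤ (⌈x - w⌉₊ : ℝ) := Nat.le_ceil _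
      have h4 : ((⌈x - w⌉₊ - 1 : ℕ) : ℝ) = (⌈x - w⌉₊ : ℝ) - 1 := by
        rw [Nat.cast_sub h1]; simp
      rw [h4]; linarith

lemma aux_disj (w : ℝ) :
    Pairwise (Function.onFun Disjoint fun n : ℕ => Set.Ioc (w + n) (w + n + 1)) := by
  have key : ∀ m n : ℕ, m < n →
      Disjoint (Set.Ioc (w + m) (w + m + 1)) (Set.Ioc (w + n) (w + n + 1)) := by
    intro m n h
    rw [Set.disjoint_left]
    intro x hx1 hx2
    have : ((m : ℝ) + 1) ≤ n := by exact_mod_cast h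
    have h1 : x ≤ w + m + 1 := hx1.2
    have h2 : w + n < x := hx2.1
    linarith
  intro m n hmn
  rcases hmn.lt_or_gt with h | h
  · exact key m n h
  · exact (key n m h).symm

set_option maxHeartbeats 1000000 in
lemma sum_sub_integral_bound {b : ℝ} (hb : 0 < b) (w : ℝ) :
    |(∑' n : ℕ, Real.exp (-b * (w + n) ^ 2)) - ∫ y in Set.Ioi w, Real.exp (-b * y ^ 2)| ≤ 2 := by
  set g : ℝ → ℝ := fun y => Real.exp (-b * y ^ 2) with hgdef
  set h : ℝ → ℝ := fun y => 2 * b * |y| * Real.exp (-b * y ^ 2) with hhdef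
  have hderiv : ∀ y : ℝ, HasDerivAt g (-2 * b * y * Real.exp (-b * y ^ 2)) y := by
    intro y
    have h1 : HasDerivAt (fun y : ℝ => -b * y ^ 2) (-b * (2 * y)) y := by
      simpa using ((hasDerivAt_pow 2 y).const_mul (-b))
    have h2 := h1.exp
    convert h2 using 1
    ring
  have hgint : Integrable g := integrable_exp_neg_mul_sq hb
  have hmul_int : Integrable (fun y : ℝ => y * Real.exp (-b * y ^ 2)) := by
    have := integrable_rpow_mul_exp_neg_mul_sq hb (s := 1) (by norm_num)
    simpa [Real.rpow_one] using this
  have hh_int : Integrable h := by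
    have h1 : Integrable (fun y : ℝ => |y| * Real.exp (-b * y ^ 2)) := by
      have := hmul_int.abs
      simpa [abs_mul, abs_of_pos (Real.exp_pos _)] using this
    have := h1.const_mul (2 * b)
    simpa [hhdef, mul_assoc] using this
  have hh_nonneg : ∀ y : ℝ, 0 ≤ h y := by
    intro y
    have := (Real.exp_pos (-b * y ^ 2)).le
    have := abs_nonneg y
    positivity
  have habs : ∀ u : ℝ, |(-2 * b * u * Real.exp (-b * u ^ 2))| = h u := by
    intro u
    rw [hhdef, abs_mul, abs_of_pos (Real.exp_pos _)]
    have : |(-2 * b * u)| = 2 * b * |u| := by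
      rw [abs_mul, abs_mul]
      simp [abs_of_pos hb]
    rw [this]
  -- partition sums
  have hA : HasSum (fun n : ℕ => ∫ x in Set.Ioc (w + n) (w + n + 1), g x)
      (∫ x in Set.Ioi w, g x) := by
    have := MeasureTheory.hasSum_integral_iUnion (μ := volume) (f := g)
      (s := fun n : ℕ => Set.Ioc (w + n) (w + n + 1)) (fun _ => measurableSet_Ioc)
      (aux_disj w) (by rw [aux_union w]; exact hgint.integrableOn)
    rwa [aux_union w] at this
  have hB : HasSum (fun n : ℕ => ∫ x in Set.Ioc (w + n) (w + n + 1), h x)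
      (∫ x in Set.Ioi w, h x) := by
    have := MeasureTheory.hasSum_integral_iUnion (μ := volume) (f := h)
      (s := fun n : ℕ => Set.Ioc (w + n) (w + n + 1)) (fun _ => measurableSet_Ioc)
      (aux_disj w) (by rw [aux_union w]; exact hh_int.integrableOn)
    rwa [aux_union w] at this
  -- per-interval estimate
  have key : ∀ a : ℝ, |g a - ∫ x in Set.Ioc a (a + 1), g x| ≤ ∫ x in Set.Ioc a (a + 1), h x := by
    intro a
    have hmeas : (volume (Set.Ioc a (a + 1))).toReal = 1 := by
      rw [Real.volume_Ioc]
      norm_num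
    have hmeas_lt : volume (Set.Ioc a (a + 1)) < ⊤ := measure_Ioc_lt_top
    have hbound : ∀ x ∈ Set.Ioc a (a + 1), |g a - g x| ≤ ∫ u in Set.Ioc a (a + 1), h u := by
      intro x hx
      have hax : a ≤ x := le_of_lt hx.1
      have hFTC : ∫ u in a..x, (-2 * b * u * Real.exp (-b * u ^ 2)) = g x - g a := by
        apply intervalIntegral.integral_eq_sub_of_hasDerivAt (fun u _ => hderiv u)
        apply Continuous.intervalIntegrable
        exact (continuous_const.mul continuous_id).mul
          (Real.continuous_exp.comp (continuous_const.mul (continuous_pow 2)))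
      have h1 : |g a - g x| ≤ ∫ u in a..x, |(-2 * b * u * Real.exp (-b * u ^ 2))| := by
        rw [abs_sub_comm, ← hFTC]
        exact intervalIntegral.abs_integral_le_integral_abs hax
      have h2 : (∫ u in a..x, |(-2 * b * u * Real.exp (-b * u ^ 2))|) = ∫ u in Set.Ioc a x, h u := by
        rw [intervalIntegral.integral_of_le hax]
        exact setIntegral_congr_fun measurableSet_Ioc (fun u _ => habs u)
      have h3 : (∫ u in Set.Ioc a x, h u) ≤ ∫ u in Set.Ioc a (a + 1), h u := by
        apply setIntegral_mono_set hh_int.integrableOn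
        · exact Filter.Eventually.of_forall hh_nonneg
        · exact (Set.Ioc_subset_Ioc_right hx.2).eventuallyLE
      calc |g a - g x| ≤ _ := h1
        _ = _ := h2
        _ ≤ _ := h3
    have hga : g a = ∫ _x in Set.Ioc a (a + 1), g a := by
      rw [setIntegral_const, measureReal_def, hmeas, one_smul]
    have hsub : g a - (∫ x in Set.Ioc a (a + 1), g x)
        = ∫ x in Set.Ioc a (a + 1), (g a - g x) := by
      rw [integral_sub (integrableOn_const (C := g a) hmeas_lt.ne) hgint.integrableOn,
        ← hga]
    rw [hsub]
    have := norm_setIntegral_le_of_norm_le_const (μ := volume)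
      (s := Set.Ioc a (a + 1)) (f := fun x => g a - g x)
      (C := ∫ u in Set.Ioc a (a + 1), h u) hmeas_lt
      (fun x hx => by simpa [Real.norm_eq_abs] using hbound x hx)
    rw [measureReal_def, hmeas, mul_one] at this
    simpa [Real.norm_eq_abs] using this
  -- route through tsum
  set A : ℕ → ℝ := fun n => ∫ x in Set.Ioc (w + n) (w + n + 1), g x with hAdef
  set B : ℕ → ℝ := fun n => ∫ x in Set.Ioc (w + n) (w + n + 1), h x with hBdef
  have hkey : ∀ n : ℕ, |g (w + n) - A n| ≤ B n := fun n => key (w + n)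
  have hBsum : Summable B := hB.summable
  have hDabs : Summable (fun n : ℕ => |g (w + n) - A n|) :=
    Summable.of_nonneg_of_le (fun n => abs_nonneg _) hkey hBsum
  have hDsum : Summable (fun n : ℕ => g (w + n) - A n) := hDabs.of_abs
  have hS_eq : (∑' n : ℕ, g (w + n))
      = (∑' n : ℕ, (g (w + n) - A n)) + ∫ x in Set.Ioi w, g x := by
    rw [← hA.tsum_eq, ← Summable.tsum_add hDsum hA.summable]
    apply tsum_congr
    intro n
    ring
  rw [hS_eq, add_sub_cancel_right]
  have hD_le : |∑' n : ℕ, (g (w + n) - A n)| ≤ ∫ x in Set.Ioi w, h x := by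
    calc |∑' n : ℕ, (g (w + n) - A n)| ≤ ∑' n : ℕ, |g (w + n) - A n| := by
          have hn : Summable (fun n : ℕ => ‖g (w + n) - A n‖) := by
            simpa only [Real.norm_eq_abs] using hDabs
          simpa only [Real.norm_eq_abs] using norm_tsum_le_tsum_norm hn
      _ ≤ ∑' n : ℕ, B n := Summable.tsum_le_tsum hkey hDabs hBsum
      _ = ∫ x in Set.Ioi w, h x := hB.tsum_eq
  refine hD_le.trans ?_
  -- ∫_{Ioi w} h ≤ 2
  have hIoi0 : (∫ x in Set.Ioi (0 : ℝ), h x) = 1 := by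
    have hd : ∀ x ∈ Set.Ioi (0 : ℝ), HasDerivAt (fun y => -g y) (h x) x := by
      intro x hx
      have := (hderiv x).neg
      refine this.congr_deriv ?_
      rw [hhdef]
      simp only [abs_of_pos (show (0 : ℝ) < x from hx)]
      ring
    have hcont : ContinuousWithinAt (fun y => -g y) (Set.Ici (0 : ℝ)) 0 := by
      apply Continuous.continuousWithinAt
      exact (Real.continuous_exp.comp (continuous_const.mul (continuous_pow 2))).neg
    have htend : Filter.Tendsto (fun y => -g y) Filter.atTop (nhds 0) := by
      rw [show (0 : ℝ) = -0 by norm_num]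
      apply Filter.Tendsto.neg
      apply Real.tendsto_exp_atBot.comp
      have h2 : Filter.Tendsto (fun y : ℝ => y ^ 2) Filter.atTop Filter.atTop :=
        Filter.tendsto_pow_atTop two_ne_zero
      have := h2.const_mul_atTop_of_neg (show -b < 0 by linarith)
      simpa using this
    have := MeasureTheory.integral_Ioi_of_hasDerivAt_of_tendsto hcont hd
      hh_int.integrableOn htend
    rw [this]
    simp [hgdef]
  rcases le_or_gt 0 w with hw | hw
  · have : (∫ x in Set.Ioi w, h x) ≤ ∫ x in Set.Ioi (0 : ℝ), h x := by
      apply setIntegral_mono_set hh_int.integrableOn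
        (Filter.Eventually.of_forall hh_nonneg)
      exact (Set.Ioi_subset_Ioi hw).eventuallyLE
    rw [hIoi0] at this
    linarith
  · have hsplit : (∫ x in Set.Ioi w, h x)
        = (∫ x in Set.Ioc w 0, h x) + ∫ x in Set.Ioi (0 : ℝ), h x := by
      rw [← setIntegral_union]
      · rw [Set.Ioc_union_Ioi_eq_Ioi hw.le]
      · exact Set.Ioc_disjoint_Ioi le_rfl
      · exact measurableSet_Ioi
      · exact hh_int.integrableOn
      · exact hh_int.integrableOn
    have hleft : (∫ x in Set.Ioc w 0, h x) ≤ 1 := by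
      have heq : (∫ x in Set.Ioc w 0, h x) = ∫ u in w..0, h u :=
        (intervalIntegral.integral_of_le hw.le).symm
      have hcongr : (∫ u in w..0, h u)
          = ∫ u in w..0, (-2 * b * u * Real.exp (-b * u ^ 2)) := by
        apply intervalIntegral.integral_congr
        intro u hu
        rw [Set.uIcc_of_le hw.le] at hu
        have hu0 : u ≤ 0 := hu.2
        rw [hhdef]
        simp only [abs_of_nonpos hu0]
        ring
      have hFTC : (∫ u in w..0, (-2 * b * u * Real.exp (-b * u ^ 2)))
          = g 0 - g w := by
        apply intervalIntegral.integral_eq_sub_of_hasDerivAt (fun u _ => hderiv u)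
        apply Continuous.intervalIntegrable
        exact (continuous_const.mul continuous_id).mul
          (Real.continuous_exp.comp (continuous_const.mul (continuous_pow 2)))
      rw [heq, hcongr, hFTC]
      have hg0 : g 0 = 1 := by simp [hgdef]
      have hgw : 0 < g w := Real.exp_pos _
      linarith
    rw [hsplit, hIoi0]
    linarith

/-- The Riemann-sum estimate: `(4πt)^{-1/2} ∑ₙ exp(−(w+n)²/(4t))` differs from
`erf(w/√t)` by at most `C/√t`, uniformly in `w ∈ ℝ` and `t > 0`. -/
theorem riemann_sum_erf_estimate :
    ∃ C : ℝ, 0 < C ∧ ∀ t : ℝ, 0 < t → ∀ w : ℝ,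
      |(Real.sqrt (4 * Real.pi * t))⁻¹ * (∑' n : ℕ, Real.exp (-(w + n) ^ 2 / (4 * t)))
        - erf (w / Real.sqrt t)| ≤ C / Real.sqrt t := by
  refine ⟨1, one_pos, fun t ht w => ?_⟩
  have hst : 0 < Real.sqrt t := Real.sqrt_pos.mpr ht
  have hb : 0 < (4 * t)⁻¹ := by positivity
  have h4pi : (0 : ℝ) < 4 * Real.pi := by positivity
  have hsq : Real.sqrt (4 * Real.pi * t) = Real.sqrt (4 * Real.pi) * Real.sqrt t :=
    Real.sqrt_mul h4pi.le t
  have hsqpos : 0 < Real.sqrt (4 * Real.pi * t) := Real.sqrt_pos.mpr (by positivity)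
  -- rewrite the tsum
  have htsum : (∑' n : ℕ, Real.exp (-(w + n) ^ 2 / (4 * t)))
      = ∑' n : ℕ, Real.exp (-(4 * t)⁻¹ * (w + n) ^ 2) := by
    apply tsum_congr
    intro n
    congr 1
    ring
  -- rewrite erf via change of variables
  have harg : ∀ x : ℝ, Real.exp (-(((Real.sqrt t)⁻¹ * x) ^ 2) / 4)
      = Real.exp (-(4 * t)⁻¹ * x ^ 2) := by
    intro x
    congr 1
    rw [mul_pow, inv_pow, Real.sq_sqrt ht.le]
    ring
  have hchange : (∫ x in Set.Ioi w, Real.exp (-(((Real.sqrt t)⁻¹ * x) ^ 2) / 4))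
      = Real.sqrt t • ∫ x in Set.Ioi ((Real.sqrt t)⁻¹ * w), Real.exp (-(x ^ 2) / 4) := by
    have := MeasureTheory.integral_comp_mul_left_Ioi
      (fun x => Real.exp (-(x ^ 2) / 4)) w (inv_pos.mpr hst)
    simpa using this
  have h6 : (∫ x in Set.Ioi w, Real.exp (-(((Real.sqrt t)⁻¹ * x) ^ 2) / 4))
      = ∫ x in Set.Ioi w, Real.exp (-(4 * t)⁻¹ * x ^ 2) :=
    setIntegral_congr_fun measurableSet_Ioi (fun x _ => harg x)
  have h5 : (∫ x in Set.Ioi ((Real.sqrt t)⁻¹ * w), Real.exp (-(x ^ 2) / 4))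
      = (Real.sqrt t)⁻¹ * ∫ x in Set.Ioi w, Real.exp (-(4 * t)⁻¹ * x ^ 2) := by
    rw [← h6, hchange, smul_eq_mul, inv_mul_cancel_left₀ hst.ne']
  have herf : erf (w / Real.sqrt t)
      = (Real.sqrt (4 * Real.pi * t))⁻¹ * ∫ y in Set.Ioi w, Real.exp (-(4 * t)⁻¹ * y ^ 2) := by
    rw [erf, show w / Real.sqrt t = (Real.sqrt t)⁻¹ * w from (inv_mul_eq_div _ _).symm, h5,
      hsq, mul_inv]
    ring
  rw [htsum, herf, ← mul_sub, abs_mul, abs_of_pos (inv_pos.mpr hsqpos)]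
  have hbound := sum_sub_integral_bound hb w
  have h2le : (2 : ℝ) ≤ Real.sqrt (4 * Real.pi) := by
    rw [show (2 : ℝ) = Real.sqrt 4 by
      rw [show (4 : ℝ) = 2 ^ 2 by norm_num, Real.sqrt_sq (by norm_num)]]
    apply Real.sqrt_le_sqrt
    nlinarith [Real.pi_gt_three]
  calc (Real.sqrt (4 * Real.pi * t))⁻¹
        * |(∑' n : ℕ, Real.exp (-(4 * t)⁻¹ * (w + n) ^ 2))
            - ∫ y in Set.Ioi w, Real.exp (-(4 * t)⁻¹ * y ^ 2)|
      ≤ (Real.sqrt (4 * Real.pi * t))⁻¹ * 2 :=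
        mul_le_mul_of_nonneg_left hbound (inv_pos.mpr hsqpos).le
    _ ≤ 1 / Real.sqrt t := by
        rw [hsq, mul_inv]
        have hinv : (Real.sqrt (4 * Real.pi))⁻¹ ≤ 2⁻¹ :=
          inv_anti₀ (by norm_num) h2le
        have hpos : (0 : ℝ) < (Real.sqrt t)⁻¹ := inv_pos.mpr hst
        rw [one_div]
        nlinarith
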